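/- Let 𝐫 = ((r_1,s_1),…,(r_v,s_v)) and 𝐭 = ((t_1,u_1),…,(t_w,u_w)) be vectors of pairs of integers with all s_i, u_j ≠ 0, and let n ∈ ℤ be such that Q_{𝐫,𝐭}(q; n) is well-defined and non-zero. Then for every positive integer b, v_{φ_b}(Q_{𝐫,𝐭}(q; n)) = Δ_b^{𝐫,𝐭}(n/b); moreover Δ_b^{𝐫,𝐭}(n/b) = 0 for all but finitely many b, and there exist ε ∈ {−1, 1} and m ∈ ℤ such that Q_{𝐫,𝐭}(q; n) = ε·q^m·∏_{b≥1} φ_b(q)^{Δ_b^{𝐫,𝐭}(n/b)}. -/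

import Mathlib

open Polynomial
open scoped Classical

noncomputable section

/-- The generalized Dwork map `D_b(α)`: the unique rational whose reduced denominator is
coprime to `b` and such that `b·D_b(α) − α ∈ {0, 1, …, b−1}`. -/
def dwork (b : ℕ) (α : ℚ) : ℚ :=
  if h : ∃ θ : ℚ, Nat.Coprime θ.den b ∧ ∃ k : ℤ, 0 ≤ k ∧ k < (b : ℤ) ∧ (b : ℚ) * θ - α = (k : ℚ)
  then h.choose else 0

/-- `α ∈ ℤ_{≤0}`. -/
def IsNonPosInt (α : ℚ) : Prop := ∃ m : ℤ, m ≤ 0 ∧ α = (m : ℚ)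

/-- `α ∈ ℤ_{>0}`. -/
def IsPosInt (α : ℚ) : Prop := ∃ m : ℤ, 0 < m ∧ α = (m : ℚ)

/-- `𝔫_α`. -/
def frakn (α : ℚ) : ℤ := if 0 ≤ α then α.num else |α.num| + 1

/-- `⟨x⟩`: the fractional part of `x` if `x ∉ ℤ`, and `1` if `x ∈ ℤ`. -/
def cangle (x : ℝ) : ℝ := if ∃ m : ℤ, x = (m : ℝ) then 1 else Int.fract x

/-- Christol order `x ⪯ y`. -/
def cle (x y : ℝ) : Prop := cangle x < cangle y ∨ (cangle x = cangle y ∧ y ≤ x)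

/-- The step function `δ_b(r, s, ·)`. -/
def qdelta (b : ℕ) (r s : ℤ) (x : ℝ) : ℤ :=
  if Int.gcd (s / (Nat.gcd (Int.gcd r s) b : ℤ)) (((b / Nat.gcd (Int.gcd r s) b : ℕ)) : ℤ) = 1 then
    ⌊(Nat.gcd (Int.gcd r s) b : ℝ) * x
        - ((dwork (b / Nat.gcd (Int.gcd r s) b) ((r : ℚ) / (s : ℚ)) : ℚ) : ℝ)
        - ((⌊1 - (r : ℚ) / (s : ℚ)⌋ : ℤ) : ℝ) / ((b / Nat.gcd (Int.gcd r s) b : ℕ) : ℝ)⌋ + 1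
  else 0

/-- The Landau-type step function `Δ_b^{𝐫,𝐭}`. -/
def qDeltaFn {v w : ℕ} (b : ℕ) (rr : Fin v → ℤ × ℤ) (tt : Fin w → ℤ × ℤ) (x : ℝ) : ℤ :=
  (∑ i, qdelta b (rr i).1 (rr i).2 x) - (∑ j, qdelta b (tt j).1 (tt j).2 x)

/-- The q-Pochhammer symbol `(q^r; q^s)_n` for `n ∈ ℕ`, inside `ℚ(q)`. -/
def qPoch (r s : ℤ) (n : ℕ) : RatFunc ℚ :=
  ∏ i ∈ Finset.range n, (1 - RatFunc.X ^ (r + s * (i : ℤ)))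

/-- The q-Pochhammer symbol `(q^r; q^s)_n` for `n ∈ ℤ`. -/
def qPochZ (r s : ℤ) (n : ℤ) : RatFunc ℚ :=
  if 0 ≤ n then qPoch r s n.toNat else (qPoch (r - s) (-s) (-n).toNat)⁻¹

/-- Multiplicity of `p` in `g`: the largest `k` with `p^k ∣ g`. -/
def polyMult (p g : Polynomial ℚ) : ℕ := sSup {k : ℕ | p ^ k ∣ g}

/-- The valuation `v_{φ_b}` on `ℚ(q)` attached to the `b`-th cyclotomic polynomial. -/
def cycVal (b : ℕ) (f : RatFunc ℚ) : ℤ :=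
  (polyMult (cyclotomic b ℚ) f.num : ℤ) - (polyMult (cyclotomic b ℚ) f.denom : ℤ)

/-- The image of an integer polynomial in `ℚ(q)`. -/
def polyZ (g : Polynomial ℤ) : RatFunc ℚ :=
  algebraMap (Polynomial ℚ) (RatFunc ℚ) (g.map (Int.castRingHom ℚ))

/-- `f ∈ ℤ[q⁻¹, q]`. -/
def IsIntLaurent (f : RatFunc ℚ) : Prop :=
  ∃ (m : ℕ) (g : Polynomial ℤ), f * RatFunc.X ^ m = polyZ g

/-- `f ∈ ℤ[q]`. -/
def IsIntPoly (f : RatFunc ℚ) : Prop := ∃ g : Polynomial ℤ, f = polyZ g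

/-- The ratio attached to a pair of integers. -/
def ratOf (p : ℤ × ℤ) : ℚ := (p.1 : ℚ) / (p.2 : ℚ)

/-- The q-hypergeometric term `Q_{𝐫,𝐭}(q; n)`, `n ∈ ℕ`. -/
def qHyp {v w : ℕ} (rr : Fin v → ℤ × ℤ) (tt : Fin w → ℤ × ℤ) (n : ℕ) : RatFunc ℚ :=
  (∏ i, qPoch (rr i).1 (rr i).2 n) / (∏ j, qPoch (tt j).1 (tt j).2 n)

/-- The q-hypergeometric term `Q_{𝐫,𝐭}(q; n)`, `n ∈ ℤ`. -/
def qHypZ {v w : ℕ} (rr : Fin v → ℤ × ℤ) (tt : Fin w → ℤ × ℤ) (n : ℤ) : RatFunc ℚ :=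
  (∏ i, qPochZ (rr i).1 (rr i).2 n) / (∏ j, qPochZ (tt j).1 (tt j).2 n)

/-- `c := gcd(r, s, b)`. -/
def cOf (p : ℤ × ℤ) (b : ℕ) : ℕ := Nat.gcd (Int.gcd p.1 p.2) b

/-- Membership in `V_b` (resp. `W_b`): `gcd(s, b) = gcd(r, s, b)`. -/
def inV (p : ℤ × ℤ) (b : ℕ) : Prop := Nat.gcd p.2.natAbs b = cOf p b

/-- `d_{𝐫,𝐭}`: the lcm of all the `s_i` and `u_j`. -/
def dRT {v w : ℕ} (rr : Fin v → ℤ × ℤ) (tt : Fin w → ℤ × ℤ) : ℕ :=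
  Nat.lcm (Finset.univ.lcm fun i => ((rr i).2).natAbs)
    (Finset.univ.lcm fun j => ((tt j).2).natAbs)

/-- `b̃`: the greatest divisor of `b` coprime to `d`. -/
def btilde (d b : ℕ) : ℕ := Nat.findGreatest (fun k => k ∣ b ∧ Nat.Coprime k d) b

/-- The unique `a ∈ {1,…,d}` with `a·b̃ ≡ 1 (mod d)`. -/
def aOf (d b : ℕ) : ℕ :=
  if h : ∃ a, 1 ≤ a ∧ a ≤ d ∧ (a * btilde d b) % d = 1 % d then h.choose else 1

/-- The representative of `b` modulo `d` lying in `{1,…,d}`. -/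
def repMod (d b : ℕ) : ℕ := if b % d = 0 then d else b % d

/-- The jump abscissa `(⟨e·α⟩ + k)/c − ⌊1 − a·α⌋`. -/
def jumpPt (p : ℤ × ℤ) (b : ℕ) (a ei : ℤ) (k : ℕ) : ℝ :=
  (cangle (((ei : ℚ) * ratOf p : ℚ) : ℝ) + (k : ℝ)) / (cOf p b : ℝ)
    - ((⌊1 - (a : ℚ) * ratOf p⌋ : ℤ) : ℝ)

/-- Number of pairs `(i,k)` with jump abscissa `⪯ x` coming from one pair `p`. -/
def XiCount (p : ℤ × ℤ) (b : ℕ) (a ei : ℤ) (x : ℝ) : ℕ :=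
  if inV p b then ((Finset.range (cOf p b)).filter fun k => cle (jumpPt p b a ei k) x).card else 0

/-- The generalized Christol step function `Ξ_{𝐫,𝐭}(b, ·)`, relative to choices `e`, `f`. -/
def Xi {v w : ℕ} (rr : Fin v → ℤ × ℤ) (tt : Fin w → ℤ × ℤ) (b : ℕ)
    (e : Fin v → ℤ) (f : Fin w → ℤ) (x : ℝ) : ℤ :=
  (∑ i, (XiCount (rr i) b ((aOf (dRT rr tt) b : ℕ) : ℤ) (e i) x : ℤ))
    - (∑ j, (XiCount (tt j) b ((aOf (dRT rr tt) b : ℕ) : ℤ) (f j) x : ℤ))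

/-- `ei` is an admissible choice for the pair `p` and `b`: positive with `b·ei ≡ c (mod s)`. -/
def goodChoice (p : ℤ × ℤ) (b : ℕ) (ei : ℤ) : Prop :=
  inV p b → 0 < ei ∧ p.2 ∣ ((b : ℤ) * ei - (cOf p b : ℤ))

end


theorem EDIV {m q r a : ℤ} (hr0 : 0 ≤ r) (hr : r < m) (h : a = m * q + r) : a / m = q := by
  have hm : m ≠ 0 := by intro h0; omega
  rw [h, add_comm, Int.add_mul_ediv_left r q hm, Int.ediv_eq_zero_of_lt hr0 hr, zero_add]

theorem H2 {m : ℤ} (hm : 0 < m) (a : ℤ) :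
    a / m = (a - 1) / m + (if m ∣ a then 1 else 0) := by
  have h0 := Int.mul_ediv_add_emod a m
  have h1 := Int.emod_nonneg a hm.ne'
  have h2 := Int.emod_lt_of_pos a hm
  by_cases hd : m ∣ a
  · have hr : a % m = 0 := Int.emod_eq_zero_of_dvd hd
    rw [if_pos hd]
    have : (a - 1) / m = a / m - 1 :=
      EDIV (r := m - 1) (by omega) (by omega) (by rw [mul_sub, mul_one]; omega)
    omega
  · have hr : a % m ≠ 0 := fun h => hd (Int.dvd_of_emod_eq_zero h)
    rw [if_neg hd]
    have : (a - 1) / m = a / m := EDIV (r := a % m - 1) (by omega) (by omega) (by omega)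
    omega

theorem NID {m : ℤ} (hm : 0 < m) (t : ℤ) : (-t - 1) / m = -(t / m) - 1 := by
  have h0 := Int.mul_ediv_add_emod t m
  have h1 := Int.emod_nonneg t hm.ne'
  have h2 := Int.emod_lt_of_pos t hm
  exact EDIV (r := m - t % m - 1) (by omega) (by omega)
    (by rw [mul_sub, mul_neg, mul_one]; omega)

theorem L1 {m : ℤ} (hm : 0 < m) {k : ℤ} (hk0 : 0 ≤ k) (hk : k < m) (n : ℕ) :
    (((Finset.range n).filter (fun j : ℕ => m ∣ (j : ℤ) - k)).card : ℤ)
      = ((n : ℤ) - k - 1) / m + 1 := by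
  induction n with
  | zero =>
    simp only [Finset.range_zero, Finset.filter_empty, Finset.card_empty, Nat.cast_zero]
    have : ((0 : ℤ) - k - 1) / m = -1 :=
      EDIV (r := m - k - 1) (by omega) (by omega) (by rw [mul_neg, mul_one]; omega)
    omega
  | succ n ih =>
    rw [Finset.range_add_one, Finset.filter_insert]
    have hstep : ((n : ℤ) + 1 - k - 1) / m
        = ((n : ℤ) - k - 1) / m + (if m ∣ (n : ℤ) - k then 1 else 0) := by
      have := H2 hm ((n : ℤ) - k)
      simpa [sub_sub] using this
    by_cases hd : m ∣ (n : ℤ) - k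
    · rw [if_pos hd, Finset.card_insert_of_notMem (by simp)]
      push_cast
      rw [hstep, if_pos hd]; omega
    · rw [if_neg hd]
      push_cast
      rw [hstep, if_neg hd]; omega

theorem FLR {b : ℕ} (hb : 0 < b) (m : ℤ) {θ : ℝ} (hθ0 : 0 < θ) (hθ1 : θ ≤ 1) :
    ⌊((m : ℝ) - θ) / (b : ℝ)⌋ = (m - 1) / (b : ℤ) := by
  have hbR : (0 : ℝ) < (b : ℝ) := by exact_mod_cast hb
  have hbZ : (0 : ℤ) < (b : ℤ) := by exact_mod_cast hb
  have h0 := Int.mul_ediv_add_emod (m - 1) (b : ℤ)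
  set q := (m - 1) / (b : ℤ) with hq
  have h1 := Int.emod_nonneg (m - 1) hbZ.ne'
  have h2 := Int.emod_lt_of_pos (m - 1) hbZ
  rw [Int.floor_eq_iff]
  constructor
  · rw [le_div_iff₀ hbR]
    have hz : ((b : ℤ) * q : ℤ) ≤ m - 1 := by omega
    have : ((q : ℝ)) * (b : ℝ) ≤ ((m : ℝ) - 1) := by
      calc ((q : ℝ)) * (b : ℝ) = (((b : ℤ) * q : ℤ) : ℝ) := by push_cast; ring
        _ ≤ (((m - 1 : ℤ)) : ℝ) := by exact_mod_cast hz
        _ = (m : ℝ) - 1 := by push_cast; ring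
    linarith
  · rw [div_lt_iff₀ hbR]
    have hz : m ≤ (b : ℤ) * q + (b : ℤ) := by omega
    have : (m : ℝ) ≤ ((q : ℝ) + 1) * (b : ℝ) := by
      calc (m : ℝ) = (((m : ℤ)) : ℝ) := by norm_num
        _ ≤ ((((b : ℤ) * q + b : ℤ)) : ℝ) := by exact_mod_cast hz
        _ = ((q : ℝ) + 1) * (b : ℝ) := by push_cast; ring
    linarith
noncomputable section

/-- signed count of divisible exponents -/
def SCP (b : ℕ) (r s : ℤ) (n : ℤ) : ℤ :=
  if 0 ≤ n then
    (((Finset.range n.toNat).filter (fun j : ℕ => (b : ℤ) ∣ r + s * (j : ℤ))).card : ℤ)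
  else
    -((((Finset.range (-n).toNat).filter
        (fun j : ℕ => (b : ℤ) ∣ (r - s) + (-s) * (j : ℤ))).card : ℤ))

theorem lemA (b : ℕ) (hb : 0 < b) (r s : ℤ) (hs : s ≠ 0) (n : ℤ) :
    qdelta b r s ((n : ℝ) / (b : ℝ)) = SCP b r s n := by
  simp only [qdelta]
  set c : ℕ := Nat.gcd (Int.gcd r s) b with hc
  have hc0 : 0 < c := Nat.gcd_pos_of_pos_right _ hb
  have hcr : (c : ℤ) ∣ r :=
    dvd_trans (Int.natCast_dvd_natCast.mpr (Nat.gcd_dvd_left _ b)) (Int.gcd_dvd_left _ _)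
  have hcs : (c : ℤ) ∣ s :=
    dvd_trans (Int.natCast_dvd_natCast.mpr (Nat.gcd_dvd_left _ b)) (Int.gcd_dvd_right _ _)
  have hcb : c ∣ b := Nat.gcd_dvd_right _ _
  set b' : ℕ := b / c with hb'def
  set s' : ℤ := s / (c : ℤ) with hs'def
  set r' : ℤ := r / (c : ℤ) with hr'def
  have hbb' : b = c * b' := (Nat.mul_div_cancel' hcb).symm
  have hss' : s = (c : ℤ) * s' := (Int.mul_ediv_cancel' hcs).symm
  have hrr' : r = (c : ℤ) * r' := (Int.mul_ediv_cancel' hcr).symm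
  have hb'0 : 0 < b' := Nat.div_pos (Nat.le_of_dvd hb hcb) hc0
  have hb'Z : (0:ℤ) < ((b':ℕ):ℤ) := by exact_mod_cast hb'0
  have hs'0 : s' ≠ 0 := by intro h; rw [h, mul_zero] at hss'; exact hs hss'
  by_cases hco : Int.gcd s' ((b' : ℕ) : ℤ) = 1
  · -- solvable case
    rw [if_pos hco]
    have hcopN : Nat.Coprime s'.natAbs b' := by
      rwa [Int.gcd_def, Int.natAbs_natCast] at hco
    have hα : (r:ℚ)/(s:ℚ) = (r':ℚ)/(s':ℚ) := by
      rw [hss', hrr']; push_cast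
      rw [mul_div_mul_left _ _ (show ((c:ℕ):ℚ) ≠ 0 by exact_mod_cast hc0.ne')]
    have bez : (1:ℤ) = s' * Int.gcdA s' ((b':ℕ):ℤ) + ((b':ℕ):ℤ) * Int.gcdB s' ((b':ℕ):ℤ) := by
      have h := Int.gcd_eq_gcd_ab s' ((b':ℕ):ℤ)
      rw [hco] at h; exact_mod_cast h
    set a : ℤ := Int.gcdA s' ((b':ℕ):ℤ) with ha
    set k : ℤ := (-r' * a) % ((b':ℕ):ℤ) with hk
    have hk0 : 0 ≤ k := Int.emod_nonneg _ hb'Z.ne'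
    have hkb : k < ((b':ℕ):ℤ) := Int.emod_lt_of_pos _ hb'Z
    have hkey : ((b':ℕ):ℤ) ∣ s' * k + r' := by
      apply Int.dvd_of_emod_eq_zero
      have hmod : k % ((b':ℕ):ℤ) = (-r' * a) % ((b':ℕ):ℤ) := Int.emod_emod_of_dvd _ dvd_rfl
      have h1 : (s' * k + r') % ((b':ℕ):ℤ) = (s' * (-r' * a) + r') % ((b':ℕ):ℤ) :=
        Int.ModEq.add_right r' (Int.ModEq.mul_left s' hmod)
      have h2 : s' * (-r' * a) + r' = ((b':ℕ):ℤ) * (r' * Int.gcdB s' ((b':ℕ):ℤ)) := by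
        linear_combination r' * bez
      rw [h1, h2, Int.mul_emod_right]
    have he : ((b':ℕ):ℤ) * ((s' * k + r') / ((b':ℕ):ℤ)) = s' * k + r' := Int.mul_ediv_cancel' hkey
    set e : ℤ := (s' * k + r') / ((b':ℕ):ℤ) with hedef
    have hs'Q : ((s':ℤ):ℚ) ≠ 0 := by exact_mod_cast hs'0
    have hex : ∃ θ : ℚ, Nat.Coprime θ.den b' ∧
        ∃ kk : ℤ, 0 ≤ kk ∧ kk < ((b':ℕ) : ℤ) ∧ ((b':ℕ) : ℚ) * θ - (r:ℚ)/(s:ℚ) = (kk : ℚ) := by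
      refine ⟨(e:ℚ)/(s':ℚ), ?_, k, hk0, hkb, ?_⟩
      · have hden : ((((e:ℚ)/(s':ℚ)).den : ℕ) : ℤ) ∣ s' := by
          rw [← Rat.divInt_eq_div]; exact Rat.den_dvd e s'
        exact Nat.Coprime.coprime_dvd_left (Int.natCast_dvd.mp hden) hcopN
      · rw [hα]
        have heQ : ((b':ℕ):ℚ) * (e:ℚ) = (s':ℚ) * (k:ℚ) + (r':ℚ) := by exact_mod_cast he
        field_simp
        linear_combination heQ
    rw [dwork, dif_pos hex]
    obtain ⟨hDden, kh, hkh0, hkhb, hkheq⟩ := hex.choose_spec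
    set D : ℚ := hex.choose with hD
    -- key divisibility for kh
    have hq1 : ((b':ℕ):ℚ) * ((s':ℚ) * D) = ((s' * kh + r' : ℤ) : ℚ) := by
      have h1 : ((b':ℕ):ℚ) * D = (r:ℚ)/(s:ℚ) + (kh:ℚ) := by linarith [hkheq]
      have h2 : (s':ℚ) * ((r:ℚ)/(s:ℚ)) = (r':ℚ) := by rw [hα]; field_simp
      push_cast
      calc ((b':ℕ):ℚ) * ((s':ℚ) * D) = (s':ℚ) * (((b':ℕ):ℚ) * D) := by ring
        _ = (s':ℚ) * ((r:ℚ)/(s:ℚ)) + (s':ℚ) * (kh:ℚ) := by rw [h1]; ring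
        _ = (s':ℚ) * (kh:ℚ) + (r':ℚ) := by rw [h2]; ring
    set q : ℚ := (s':ℚ) * D with hqdef
    have hqden1 : q.den ∣ D.den := by
      have hDrep : q = Rat.divInt (s' * D.num) ((D.den : ℕ) : ℤ) := by
        rw [Rat.divInt_eq_div]; push_cast
        rw [mul_div_assoc, Rat.num_div_den]
      have := Rat.den_dvd (s' * D.num) ((D.den : ℕ) : ℤ)
      rw [← hDrep] at this
      exact Int.natCast_dvd_natCast.mp (by exact_mod_cast this)
    have hqdenb : q.den ∣ b' := by
      have hb'Q : ((b':ℕ):ℚ) ≠ 0 := by exact_mod_cast hb'0.ne'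
      have hrep : q = Rat.divInt (s' * kh + r') ((b':ℕ) : ℤ) := by
        rw [Rat.divInt_eq_div,
          eq_div_iff (show (((b':ℕ):ℤ):ℚ) ≠ 0 by exact_mod_cast hb'0.ne'), mul_comm]
        exact_mod_cast hq1
      have := Rat.den_dvd (s' * kh + r') ((b':ℕ) : ℤ)
      rw [← hrep] at this
      exact Int.natCast_dvd_natCast.mp (by exact_mod_cast this)
    have hqden : q.den = 1 := by
      have hcop : Nat.Coprime q.den b' := Nat.Coprime.coprime_dvd_left hqden1 hDden
      exact Nat.eq_one_of_dvd_one (hcop ▸ Nat.dvd_gcd dvd_rfl hqdenb)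
    have hkhkey : ((b':ℕ):ℤ) ∣ s' * kh + r' := by
      have hqz : q = (q.num : ℚ) := ((Rat.den_eq_one_iff q).mp hqden).symm
      have h1 : ((b':ℕ):ℚ) * (q.num:ℚ) = ((s' * kh + r' : ℤ):ℚ) := by rw [← hqz]; exact hq1
      exact ⟨q.num, by exact_mod_cast h1.symm⟩
    -- divisibility characterization
    have DIV : ∀ t : ℤ, ((b:ℕ):ℤ) ∣ r + s * t ↔ ((b':ℕ):ℤ) ∣ t - kh := by
      intro t
      have h1 : r + s * t = (c:ℤ) * (r' + s' * t) := by rw [hrr', hss']; ring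
      have h2 : ((b:ℕ):ℤ) = (c:ℤ) * ((b':ℕ):ℤ) := by exact_mod_cast hbb'
      rw [h1, h2, mul_dvd_mul_iff_left (show (c:ℤ) ≠ 0 by exact_mod_cast hc0.ne')]
      have h3 : r' + s' * t = (s' * kh + r') + s' * (t - kh) := by ring
      rw [h3]
      constructor
      · intro h
        have hmul : ((b':ℕ):ℤ) ∣ s' * (t - kh) := (dvd_add_right hkhkey).mp h
        have hcop : IsCoprime ((b':ℕ):ℤ) s' :=
          (Int.isCoprime_iff_gcd_eq_one.mpr hco).symm
        exact hcop.dvd_of_dvd_mul_left hmul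
      · intro h; exact dvd_add hkhkey (h.mul_left s')
    -- θ bounds
    set L : ℤ := ⌊1 - (r:ℚ)/(s:ℚ)⌋ with hL
    have hθ0 : (0:ℚ) < (r:ℚ)/(s:ℚ) + (L:ℚ) := by
      have := Int.sub_one_lt_floor (1 - (r:ℚ)/(s:ℚ)); rw [← hL] at this; linarith
    have hθ1 : (r:ℚ)/(s:ℚ) + (L:ℚ) ≤ 1 := by
      have := Int.floor_le (1 - (r:ℚ)/(s:ℚ)); rw [← hL] at this; linarith
    -- compute the floor
    have harg : (c:ℝ) * ((n:ℝ)/((b:ℕ):ℝ)) - ((D:ℚ):ℝ) - ((L:ℤ):ℝ)/((b':ℕ):ℝ)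
        = (((n - kh : ℤ):ℝ) - (((r:ℚ)/(s:ℚ) + (L:ℚ) : ℚ):ℝ)) / ((b':ℕ):ℝ) := by
      have hDval : ((b':ℕ):ℚ) * D = (r:ℚ)/(s:ℚ) + (kh:ℚ) := by linarith [hkheq]
      have hDvalR : ((b':ℕ):ℝ) * ((D:ℚ):ℝ) = ((((r:ℚ)/(s:ℚ) : ℚ)):ℝ) + ((kh:ℤ):ℝ) := by
        exact_mod_cast congrArg (fun x : ℚ => (x : ℝ)) hDval
      have hbcast : ((b:ℕ):ℝ) = ((c:ℕ):ℝ) * ((b':ℕ):ℝ) := by exact_mod_cast hbb'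
      have hcR : ((c:ℕ):ℝ) ≠ 0 := by exact_mod_cast hc0.ne'
      have hb'R : ((b':ℕ):ℝ) ≠ 0 := by exact_mod_cast hb'0.ne'
      have hsum : ((((r:ℚ)/(s:ℚ) + (L:ℚ) : ℚ)):ℝ) = ((((r:ℚ)/(s:ℚ) : ℚ)):ℝ) + ((L:ℤ):ℝ) := by
        push_cast; ring
      rw [hbcast, hsum]
      generalize ((((r:ℚ)/(s:ℚ) : ℚ)):ℝ) = A at hDvalR ⊢
      field_simp
      push_cast
      linear_combination (-1 : ℝ) * hDvalR
    rw [harg, FLR hb'0 (n - kh) (by exact_mod_cast hθ0) (by exact_mod_cast hθ1)]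
    -- now identify with the signed count
    rw [SCP]
    split_ifs with hn
    · have hfilter : (Finset.range n.toNat).filter (fun j : ℕ => ((b:ℕ):ℤ) ∣ r + s * (j:ℤ))
          = (Finset.range n.toNat).filter (fun j : ℕ => ((b':ℕ):ℤ) ∣ (j:ℤ) - kh) :=
        Finset.filter_congr (fun j _ => by rw [DIV])
      rw [hfilter, L1 hb'Z hkh0 hkhb n.toNat]
      rw [Int.toNat_of_nonneg hn]
    · push_neg at hn
      set m : ℕ := (-n).toNat with hm
      have hmn : ((m:ℕ):ℤ) = -n := Int.toNat_of_nonneg (by omega)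
      set k₀ : ℤ := ((b':ℕ):ℤ) - 1 - kh with hk₀
      have hfilter : (Finset.range m).filter (fun j : ℕ => ((b:ℕ):ℤ) ∣ (r - s) + (-s) * (j:ℤ))
          = (Finset.range m).filter (fun j : ℕ => ((b':ℕ):ℤ) ∣ (j:ℤ) - k₀) := by
        refine Finset.filter_congr (fun j _ => ?_)
        have h1 : (r - s) + (-s) * (j:ℤ) = r + s * (-1 - (j:ℤ)) := by ring
        rw [h1, DIV (-1 - (j:ℤ))]
        have h2 : (-1 - (j:ℤ)) - kh = -(((j:ℤ) - k₀) + ((b':ℕ):ℤ)) := by rw [hk₀]; ring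
        rw [h2, dvd_neg, add_comm, dvd_add_right (dvd_refl _)]
      rw [hfilter, L1 hb'Z (by omega) (by omega) m]
      have h2 : ((m:ℤ) - k₀ - 1) = ((m:ℤ) + kh) + ((b':ℕ):ℤ) * (-1) := by rw [hk₀]; ring
      rw [h2, Int.add_mul_ediv_left _ _ hb'Z.ne']
      have hNID := NID hb'Z ((m:ℤ) + kh)
      have h3 : n - kh - 1 = -((m:ℤ) + kh) - 1 := by omega
      rw [h3, hNID]; ring
  · -- non-solvable case
    rw [if_neg hco]
    have key : ∀ t : ℤ, ¬ ((b:ℕ):ℤ) ∣ r + s * t := by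
      intro t hdvd
      apply hco
      set G : ℕ := Int.gcd s ((b:ℕ):ℤ) with hG
      have h1 : ((G:ℕ):ℤ) ∣ s := Int.gcd_dvd_left _ _
      have h2 : ((G:ℕ):ℤ) ∣ ((b:ℕ):ℤ) := Int.gcd_dvd_right _ _
      have hg1 : ((G:ℕ):ℤ) ∣ r := by
        obtain ⟨u, hu⟩ := hdvd
        have : r = ((b:ℕ):ℤ) * u - s * t := by linarith
        rw [this]
        exact dvd_sub (h2.mul_right u) (h1.mul_right t)
      have hGc : G ∣ c := by
        refine Nat.dvd_gcd ?_ (Int.natCast_dvd_natCast.mp h2)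
        exact Int.natCast_dvd_natCast.mp (Int.dvd_coe_gcd hg1 h1)
      have hcG : c ∣ G := by
        apply Int.natCast_dvd_natCast.mp
        exact Int.dvd_coe_gcd hcs (by exact_mod_cast Int.natCast_dvd_natCast.mpr hcb)
      have hGeq : G = c := Nat.dvd_antisymm hGc hcG
      have hmul : Int.gcd ((c:ℤ) * s') ((c:ℤ) * ((b':ℕ):ℤ)) = c * Int.gcd s' ((b':ℕ):ℤ) := by
        rw [Int.gcd_mul_left, Int.natAbs_natCast]
      rw [← hss'] at hmul
      have hcb'' : (c:ℤ) * ((b':ℕ):ℤ) = ((b:ℕ):ℤ) := by exact_mod_cast hbb'.symm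
      rw [hcb''] at hmul
      have hfin : c * Int.gcd s' ((b':ℕ):ℤ) = c * 1 := by
        rw [← hmul, mul_one, ← hG]; exact hGeq
      exact Nat.eq_of_mul_eq_mul_left hc0 hfin
    rw [SCP]
    split_ifs with hn
    · rw [Finset.filter_false_of_mem (s := Finset.range n.toNat) (fun j _ => key (j:ℤ)),
        Finset.card_empty, Nat.cast_zero]
    · have : ∀ j ∈ Finset.range (-n).toNat, ¬ ((b:ℕ):ℤ) ∣ (r - s) + (-s) * (j:ℤ) := by
        intro j _ hd
        apply key (-1 - (j:ℤ))
        have h1 : r + s * (-1 - (j:ℤ)) = (r - s) + (-s) * (j:ℤ) := by ring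
        rw [h1]; exact hd
      rw [Finset.filter_false_of_mem this, Finset.card_empty, Nat.cast_zero, neg_zero]

end
noncomputable section
open Polynomial

/-- image of cyclotomic in `ℚ(q)` -/
def aphi (d : ℕ) : RatFunc ℚ := algebraMap (Polynomial ℚ) (RatFunc ℚ) (cyclotomic d ℚ)

theorem aphi_ne_zero (d : ℕ) : aphi d ≠ 0 :=
  RatFunc.algebraMap_ne_zero (cyclotomic_ne_zero d ℚ)

theorem cyc_fin {b : ℕ} (hb : 0 < b) {g : Polynomial ℚ} (hg : g ≠ 0) :
    FiniteMultiplicity (cyclotomic b ℚ) g :=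
  Polynomial.finiteMultiplicity_of_degree_pos_of_monic
    (degree_cyclotomic_pos b ℚ hb) (cyclotomic.monic b ℚ) hg

theorem polyMult_eq {b : ℕ} (hb : 0 < b) {g : Polynomial ℚ} (hg : g ≠ 0) :
    polyMult (cyclotomic b ℚ) g = multiplicity (cyclotomic b ℚ) g := by
  have hfin := cyc_fin hb hg
  have hub : ∀ k ∈ {k : ℕ | cyclotomic b ℚ ^ k ∣ g}, k ≤ multiplicity (cyclotomic b ℚ) g := by
    intro k hk
    by_contra hlt
    exact hfin.not_pow_dvd_of_multiplicity_lt (by omega) hk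
  apply le_antisymm
  · exact csSup_le ⟨0, by simp⟩ hub
  · exact le_csSup ⟨multiplicity (cyclotomic b ℚ) g, hub⟩ (pow_multiplicity_dvd _ _)

theorem cyc_prime {b : ℕ} (hb : 0 < b) : Prime (cyclotomic b ℚ) :=
  UniqueFactorizationMonoid.irreducible_iff_prime.mp (cyclotomic.irreducible_rat hb)

theorem mult_mul {b : ℕ} (hb : 0 < b) {x y : Polynomial ℚ} (hx : x ≠ 0) (hy : y ≠ 0) :
    multiplicity (cyclotomic b ℚ) (x * y)
      = multiplicity (cyclotomic b ℚ) x + multiplicity (cyclotomic b ℚ) y :=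
  multiplicity_mul (cyc_prime hb) (cyc_fin hb (mul_ne_zero hx hy))

theorem mult_prod {b : ℕ} (hb : 0 < b) {ι : Type*} (t : Finset ι) (f : ι → Polynomial ℚ)
    (hf : ∀ i ∈ t, f i ≠ 0) :
    multiplicity (cyclotomic b ℚ) (∏ i ∈ t, f i)
      = ∑ i ∈ t, multiplicity (cyclotomic b ℚ) (f i) := by
  classical
  induction t using Finset.induction_on with
  | empty => simp [multiplicity_eq_zero.mpr ((cyc_prime hb).not_dvd_one)]
  | insert a t' hnotmem ih =>
    rw [Finset.prod_insert hnotmem, Finset.sum_insert hnotmem,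
      mult_mul hb (hf a (Finset.mem_insert_self a t'))
        (Finset.prod_ne_zero_iff.mpr (fun i hi => hf i (Finset.mem_insert_of_mem hi))),
      ih (fun i hi => hf i (Finset.mem_insert_of_mem hi))]

theorem cyc_ne_X {b : ℕ} (hb : 0 < b) : cyclotomic b ℚ ≠ X := by
  intro h
  have hco := congrArg (fun g : Polynomial ℚ => g.coeff 0) h
  simp only [coeff_X_zero] at hco
  match b, hb with
  | 1, _ => rw [cyclotomic_one] at hco; simp at hco
  | (n+2), _ =>
    rw [cyclotomic_coeff_zero ℚ (by omega)] at hco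
    norm_num at hco

theorem mult_C {b : ℕ} (hb : 0 < b) {ε : ℚ} (hε : ε ≠ 0) :
    multiplicity (cyclotomic b ℚ) (C ε) = 0 := by
  rw [multiplicity_eq_zero]
  intro h
  exact (cyc_prime hb).not_unit (isUnit_of_dvd_unit h (isUnit_C.mpr (isUnit_iff_ne_zero.mpr hε)))

theorem mult_X_pow {b : ℕ} (hb : 0 < b) (a : ℕ) :
    multiplicity (cyclotomic b ℚ) (X ^ a) = 0 := by
  rw [multiplicity_eq_zero]
  intro h
  have h1 : cyclotomic b ℚ ∣ X := (cyc_prime hb).dvd_of_dvd_pow h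
  exact cyc_ne_X hb (eq_of_monic_of_associated (cyclotomic.monic b ℚ) monic_X
    ((cyclotomic.irreducible_rat hb).associated_of_dvd irreducible_X h1))

theorem mult_cyc_pow {b d : ℕ} (hb : 0 < b) (hd : 0 < d) (k : ℕ) :
    multiplicity (cyclotomic b ℚ) (cyclotomic d ℚ ^ k) = if b = d then k else 0 := by
  split_ifs with hbd
  · subst hbd
    exact multiplicity_pow_self (cyclotomic_ne_zero b ℚ) (cyc_prime hb).not_unit k
  · rw [multiplicity_eq_zero]
    intro h
    have h1 : cyclotomic b ℚ ∣ cyclotomic d ℚ := (cyc_prime hb).dvd_of_dvd_pow h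
    have h2 : cyclotomic b ℚ = cyclotomic d ℚ :=
      eq_of_monic_of_associated (cyclotomic.monic b ℚ) (cyclotomic.monic d ℚ)
        ((cyclotomic.irreducible_rat hb).associated_of_dvd (cyclotomic.irreducible_rat hd) h1)
    exact hbd (cyclotomic_injective h2)

theorem cycVal_eq {b : ℕ} (hb : 0 < b) {A B : Polynomial ℚ} (hA : A ≠ 0) (hB : B ≠ 0)
    {f : RatFunc ℚ}
    (hf : f = algebraMap (Polynomial ℚ) (RatFunc ℚ) A / algebraMap (Polynomial ℚ) (RatFunc ℚ) B) :
    cycVal b f = (multiplicity (cyclotomic b ℚ) A : ℤ) - multiplicity (cyclotomic b ℚ) B := by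
  have hAm : algebraMap (Polynomial ℚ) (RatFunc ℚ) A ≠ 0 := RatFunc.algebraMap_ne_zero hA
  have hBm : algebraMap (Polynomial ℚ) (RatFunc ℚ) B ≠ 0 := RatFunc.algebraMap_ne_zero hB
  have hf0 : f ≠ 0 := hf ▸ div_ne_zero hAm hBm
  have hden0 : f.denom ≠ 0 := RatFunc.denom_ne_zero f
  have hnum0 : f.num ≠ 0 := RatFunc.num_ne_zero hf0
  have hdenm : algebraMap (Polynomial ℚ) (RatFunc ℚ) f.denom ≠ 0 :=
    RatFunc.algebraMap_ne_zero hden0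
  have hcross : f.num * B = A * f.denom := by
    have h1 : algebraMap (Polynomial ℚ) (RatFunc ℚ) f.num
          / algebraMap (Polynomial ℚ) (RatFunc ℚ) f.denom
        = algebraMap (Polynomial ℚ) (RatFunc ℚ) A / algebraMap (Polynomial ℚ) (RatFunc ℚ) B :=
      (RatFunc.num_div_denom f).trans hf
    have h2 := (div_eq_div_iff hdenm hBm).mp h1
    rw [← map_mul, ← map_mul] at h2
    exact IsFractionRing.injective (Polynomial ℚ) (RatFunc ℚ) h2
  have hmul := congrArg (multiplicity (cyclotomic b ℚ)) hcross
  rw [mult_mul hb hnum0 hB, mult_mul hb hA hden0] at hmul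
  rw [cycVal, polyMult_eq hb hnum0, polyMult_eq hb hden0]
  omega

/-! ### Shape: factored form of a rational function -/

def Shape (N : ℕ) (z : ℕ → ℤ) (f : RatFunc ℚ) : Prop :=
  ∃ ε : ℚ, ∃ m : ℤ, (ε = 1 ∨ ε = -1) ∧
    f = RatFunc.C ε * RatFunc.X ^ m * ∏ d ∈ Finset.Icc 1 N, (aphi d) ^ (z d)

theorem Shape_congr {N : ℕ} {z z' : ℕ → ℤ} {f : RatFunc ℚ} (h : ∀ d, z d = z' d)
    (hs : Shape N z f) : Shape N z' f := by
  have : z = z' := funext h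
  rwa [← this]

theorem Shape_ne_zero {N : ℕ} {z : ℕ → ℤ} {f : RatFunc ℚ} (hs : Shape N z f) : f ≠ 0 := by
  obtain ⟨ε, m, hε, hf⟩ := hs
  have hε0 : ε ≠ 0 := by rcases hε with h | h <;> simp [h]
  rw [hf]
  refine mul_ne_zero (mul_ne_zero ?_ ?_) ?_
  · simpa using RatFunc.algebraMap_ne_zero (Polynomial.C_ne_zero.mpr hε0)
  · exact zpow_ne_zero _ RatFunc.X_ne_zero
  · exact Finset.prod_ne_zero_iff.mpr fun d _ => zpow_ne_zero _ (aphi_ne_zero d)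

theorem Shape_one {N : ℕ} : Shape N (fun _ => 0) 1 :=
  ⟨1, 0, Or.inl rfl, by simp⟩

theorem Shape_mul {N : ℕ} {z z' : ℕ → ℤ} {f g : RatFunc ℚ}
    (hf : Shape N z f) (hg : Shape N z' g) : Shape N (fun d => z d + z' d) (f * g) := by
  obtain ⟨ε, m, hε, hfe⟩ := hf
  obtain ⟨ε', m', hε', hge⟩ := hg
  refine ⟨ε * ε', m + m', ?_, ?_⟩
  · rcases hε with h | h <;> rcases hε' with h' | h' <;> simp [h, h']
  · rw [hfe, hge, map_mul, zpow_add₀ RatFunc.X_ne_zero]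
    rw [show (∏ d ∈ Finset.Icc 1 N, aphi d ^ (z d + z' d))
        = (∏ d ∈ Finset.Icc 1 N, aphi d ^ z d) * ∏ d ∈ Finset.Icc 1 N, aphi d ^ z' d by
      rw [← Finset.prod_mul_distrib]
      exact Finset.prod_congr rfl fun d _ => zpow_add₀ (aphi_ne_zero d) _ _]
    ring

theorem Shape_inv {N : ℕ} {z : ℕ → ℤ} {f : RatFunc ℚ}
    (hf : Shape N z f) : Shape N (fun d => -(z d)) f⁻¹ := by
  obtain ⟨ε, m, hε, hfe⟩ := hf
  refine ⟨ε, -m, hε, ?_⟩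
  have hinv : ε⁻¹ = ε := by rcases hε with h | h <;> rw [h] <;> norm_num
  rw [hfe, mul_inv, mul_inv, ← map_inv₀, hinv, ← zpow_neg]
  congr 1
  rw [← Finset.prod_inv_distrib]
  exact Finset.prod_congr rfl fun d _ => (zpow_neg _ _).symm

theorem Shape_prod {N : ℕ} {ι : Type*} (t : Finset ι) (z : ι → ℕ → ℤ) (f : ι → RatFunc ℚ)
    (h : ∀ i ∈ t, Shape N (z i) (f i)) :
    Shape N (fun d => ∑ i ∈ t, z i d) (∏ i ∈ t, f i) := by
  classical
  induction t using Finset.induction_on with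
  | empty => simpa using (Shape_one (N := N))
  | insert a t' hnotmem ih =>
    rw [Finset.prod_insert hnotmem]
    refine Shape_congr (fun d => ?_)
      (Shape_mul (h a (Finset.mem_insert_self a t'))
        (ih fun i hi => h i (Finset.mem_insert_of_mem hi)))
    rw [Finset.sum_insert hnotmem]

/-- the factorization of `X^{|e|} - 1` inside a window `Icc 1 N` -/
theorem prod_window {e : ℤ} (he : e ≠ 0) {N : ℕ} (hN : e.natAbs ≤ N) :
    algebraMap (Polynomial ℚ) (RatFunc ℚ) (X ^ e.natAbs - 1)
      = ∏ d ∈ Finset.Icc 1 N, (aphi d) ^ (if (d : ℤ) ∣ e then (1:ℤ) else 0) := by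
  have ha : 0 < e.natAbs := Int.natAbs_pos.mpr he
  have hsub : e.natAbs.divisors ⊆ Finset.Icc 1 N := by
    intro d hd
    rw [Finset.mem_Icc]
    exact ⟨Nat.pos_of_mem_divisors hd,
      le_trans (Nat.le_of_dvd ha (Nat.dvd_of_mem_divisors hd)) hN⟩
  rw [← prod_cyclotomic_eq_X_pow_sub_one ha ℚ, map_prod]
  have h1 : ∀ d ∈ e.natAbs.divisors,
      algebraMap (Polynomial ℚ) (RatFunc ℚ) (cyclotomic d ℚ)
        = (aphi d) ^ (if (d : ℤ) ∣ e then (1:ℤ) else 0) := by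
    intro d hd
    rw [if_pos (Int.natCast_dvd.mpr (Nat.dvd_of_mem_divisors hd)), zpow_one]
    rfl
  rw [Finset.prod_congr rfl h1]
  refine Finset.prod_subset hsub fun d hd hnd => ?_
  have : ¬ (d : ℤ) ∣ e := by
    intro hdvd
    exact hnd (Nat.mem_divisors.mpr ⟨Int.natCast_dvd.mp hdvd, ha.ne'⟩)
  rw [if_neg this, zpow_zero]

theorem Shape_factor {e : ℤ} (he : e ≠ 0) {N : ℕ} (hN : e.natAbs ≤ N) :
    Shape N (fun d => if (d:ℤ) ∣ e then 1 else 0) (1 - RatFunc.X ^ e) := by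
  have hprod := prod_window he hN
  have hmap : algebraMap (Polynomial ℚ) (RatFunc ℚ) (X ^ e.natAbs - 1)
      = RatFunc.X ^ ((e.natAbs : ℕ) : ℤ) - 1 := by
    rw [map_sub, map_pow, map_one, RatFunc.algebraMap_X, zpow_natCast]
  rcases lt_or_gt_of_ne he with hneg | hpos
  · -- e < 0
    have hae : ((e.natAbs : ℕ) : ℤ) = -e := by omega
    refine ⟨1, e, Or.inl rfl, ?_⟩
    rw [map_one, ← hprod, hmap, hae]
    have h0 : RatFunc.X ^ e * RatFunc.X ^ (-e) = (1 : RatFunc ℚ) := by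
      rw [← zpow_add₀ (RatFunc.X_ne_zero (K := ℚ))]; norm_num
    rw [mul_sub, one_mul, mul_one, h0]
  · -- e > 0
    have hae : ((e.natAbs : ℕ) : ℤ) = e := by omega
    refine ⟨-1, 0, Or.inr rfl, ?_⟩
    have hC : (RatFunc.C (-1 : ℚ)) = -1 := by
      rw [show (-1 : ℚ) = -(1:ℚ) by ring, map_neg, map_one]
    rw [← hprod, hmap, hae, hC, zpow_zero]
    ring

end
noncomputable section
open Polynomial

theorem aphi_def (d : ℕ) :
    algebraMap (Polynomial ℚ) (RatFunc ℚ) (cyclotomic d ℚ) = aphi d := rfl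

theorem cycVal_of_Shape {N : ℕ} {z : ℕ → ℤ} {f : RatFunc ℚ} (hs : Shape N z f)
    {b : ℕ} (hb : 0 < b) :
    cycVal b f = if b ≤ N then z b else 0 := by
  obtain ⟨ε, m, hε, hf⟩ := hs
  have hε0 : ε ≠ 0 := by rcases hε with h | h <;> rw [h] <;> norm_num
  set A : Polynomial ℚ :=
    C ε * X ^ m.toNat * ∏ d ∈ Finset.Icc 1 N, cyclotomic d ℚ ^ (z d).toNat with hA
  set B : Polynomial ℚ :=
    X ^ (-m).toNat * ∏ d ∈ Finset.Icc 1 N, cyclotomic d ℚ ^ (-(z d)).toNat with hB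
  have hprodA0 : (∏ d ∈ Finset.Icc 1 N, cyclotomic d ℚ ^ (z d).toNat) ≠ 0 :=
    Finset.prod_ne_zero_iff.mpr fun d _ => pow_ne_zero _ (cyclotomic_ne_zero d ℚ)
  have hprodB0 : (∏ d ∈ Finset.Icc 1 N, cyclotomic d ℚ ^ (-(z d)).toNat) ≠ 0 :=
    Finset.prod_ne_zero_iff.mpr fun d _ => pow_ne_zero _ (cyclotomic_ne_zero d ℚ)
  have hC0 : (C ε : Polynomial ℚ) ≠ 0 := C_ne_zero.mpr hε0
  have hXA : (X ^ m.toNat : Polynomial ℚ) ≠ 0 := pow_ne_zero _ X_ne_zero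
  have hXB : (X ^ (-m).toNat : Polynomial ℚ) ≠ 0 := pow_ne_zero _ X_ne_zero
  have hA0 : A ≠ 0 := mul_ne_zero (mul_ne_zero hC0 hXA) hprodA0
  have hB0 : B ≠ 0 := mul_ne_zero hXB hprodB0
  have hfAB : f = algebraMap (Polynomial ℚ) (RatFunc ℚ) A
      / algebraMap (Polynomial ℚ) (RatFunc ℚ) B := by
    rw [eq_div_iff (RatFunc.algebraMap_ne_zero hB0), hf, hA, hB]
    simp only [map_mul, map_pow, map_prod, RatFunc.algebraMap_C, RatFunc.algebraMap_X, aphi_def]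
    have hXm : RatFunc.X ^ m * RatFunc.X ^ ((-m).toNat)
        = (RatFunc.X : RatFunc ℚ) ^ (m.toNat) := by
      rw [← zpow_natCast (RatFunc.X : RatFunc ℚ) ((-m).toNat),
        ← zpow_natCast (RatFunc.X : RatFunc ℚ) m.toNat,
        ← zpow_add₀ (RatFunc.X_ne_zero (K := ℚ))]
      congr 1; omega
    have hphi : ∀ d ∈ Finset.Icc 1 N,
        aphi d ^ (z d) * aphi d ^ ((-(z d)).toNat) = aphi d ^ ((z d).toNat) := by
      intro d _
      rw [← zpow_natCast (aphi d) ((-(z d)).toNat), ← zpow_natCast (aphi d) (z d).toNat,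
        ← zpow_add₀ (aphi_ne_zero d)]
      congr 1; omega
    calc RatFunc.C ε * RatFunc.X ^ m * (∏ d ∈ Finset.Icc 1 N, aphi d ^ z d)
          * (RatFunc.X ^ ((-m).toNat) * ∏ d ∈ Finset.Icc 1 N, aphi d ^ ((-(z d)).toNat))
        = RatFunc.C ε * (RatFunc.X ^ m * RatFunc.X ^ ((-m).toNat))
          * ∏ d ∈ Finset.Icc 1 N, (aphi d ^ (z d) * aphi d ^ ((-(z d)).toNat)) := by
          rw [Finset.prod_mul_distrib]; ring
      _ = RatFunc.C ε * RatFunc.X ^ m.toNat * ∏ d ∈ Finset.Icc 1 N, aphi d ^ ((z d).toNat) := by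
          rw [hXm, Finset.prod_congr rfl hphi]
  have hmultA : multiplicity (cyclotomic b ℚ) A = if b ≤ N then (z b).toNat else 0 := by
    rw [hA, mult_mul hb (mul_ne_zero hC0 hXA) hprodA0, mult_mul hb hC0 hXA,
      mult_C hb hε0, mult_X_pow hb,
      mult_prod hb _ _ (fun d _ => pow_ne_zero _ (cyclotomic_ne_zero d ℚ)),
      Finset.sum_congr rfl (fun d hd =>
        mult_cyc_pow hb (Finset.mem_Icc.mp hd).1 ((z d).toNat)),
      Finset.sum_ite_eq,
      if_congr (by rw [Finset.mem_Icc]; omega : (b ∈ Finset.Icc 1 N) ↔ b ≤ N) rfl rfl]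
    omega
  have hmultB : multiplicity (cyclotomic b ℚ) B = if b ≤ N then (-(z b)).toNat else 0 := by
    rw [hB, mult_mul hb hXB hprodB0, mult_X_pow hb,
      mult_prod hb _ _ (fun d _ => pow_ne_zero _ (cyclotomic_ne_zero d ℚ)),
      Finset.sum_congr rfl (fun d hd =>
        mult_cyc_pow hb (Finset.mem_Icc.mp hd).1 ((-(z d)).toNat)),
      Finset.sum_ite_eq,
      if_congr (by rw [Finset.mem_Icc]; omega : (b ∈ Finset.Icc 1 N) ↔ b ≤ N) rfl rfl]
    omega
  rw [cycVal_eq hb hA0 hB0 hfAB, hmultA, hmultB]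
  split_ifs with h <;> omega

/-! ### Shape of the q-Pochhammer symbols -/

theorem Shape_qPoch {r s : ℤ} {n : ℕ} {N : ℕ}
    (h : ∀ j : ℕ, j < n → (r + s * (j:ℤ)) ≠ 0 ∧ (r + s * (j:ℤ)).natAbs ≤ N) :
    Shape N
      (fun d => (((Finset.range n).filter (fun j : ℕ => (d:ℤ) ∣ r + s * (j:ℤ))).card : ℤ))
      (qPoch r s n) := by
  rw [qPoch]
  refine Shape_congr (fun d => ?_)
    (Shape_prod (Finset.range n)
      (fun j d => if (d:ℤ) ∣ (r + s * (j:ℤ)) then 1 else 0)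
      (fun j => 1 - RatFunc.X ^ (r + s * (j:ℤ)))
      (fun j hj => Shape_factor (h j (Finset.mem_range.mp hj)).1
        (h j (Finset.mem_range.mp hj)).2))
  rw [Finset.card_filter, Nat.cast_sum]
  exact Finset.sum_congr rfl fun j _ => by split_ifs <;> simp_all

theorem Shape_qPochZ {r s : ℤ} (n : ℤ) {N : ℕ}
    (hpos : ∀ j : ℕ, 0 ≤ n → (j:ℤ) < n →
      r + s*(j:ℤ) ≠ 0 ∧ (r + s*(j:ℤ)).natAbs ≤ N)
    (hneg : ∀ j : ℕ, n < 0 → (j:ℤ) < -n →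
      (r - s) + (-s)*(j:ℤ) ≠ 0 ∧ ((r-s) + (-s)*(j:ℤ)).natAbs ≤ N) :
    Shape N (fun d => SCP d r s n) (qPochZ r s n) := by
  rw [qPochZ]
  split_ifs with hn
  · refine Shape_congr (fun d => ?_)
      (Shape_qPoch (r := r) (s := s) (n := n.toNat) (N := N)
        (fun j hj => hpos j hn (by omega)))
    rw [SCP, if_pos hn]
  · push_neg at hn
    refine Shape_congr (fun d => ?_)
      (Shape_inv (Shape_qPoch (r := r - s) (s := -s) (n := (-n).toNat) (N := N)
        (fun j hj => hneg j hn (by omega))))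
    rw [SCP, if_neg (not_le.mpr hn)]

theorem SCP_zero {r s : ℤ} {n : ℤ} {N d : ℕ} (hd : N < d)
    (hpos : ∀ j : ℕ, 0 ≤ n → (j:ℤ) < n →
      r + s*(j:ℤ) ≠ 0 ∧ (r + s*(j:ℤ)).natAbs ≤ N)
    (hneg : ∀ j : ℕ, n < 0 → (j:ℤ) < -n →
      (r - s) + (-s)*(j:ℤ) ≠ 0 ∧ ((r-s) + (-s)*(j:ℤ)).natAbs ≤ N) :
    SCP d r s n = 0 := by
  rw [SCP]
  split_ifs with hn
  · rw [Finset.filter_false_of_mem, Finset.card_empty, Nat.cast_zero]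
    intro j hj hdvd
    obtain ⟨hne, hle⟩ := hpos j hn (by simp at hj; omega)
    have h1 : d ∣ (r + s*(j:ℤ)).natAbs := Int.natCast_dvd.mp hdvd
    have h2 : d ≤ (r + s*(j:ℤ)).natAbs := Nat.le_of_dvd (Int.natAbs_pos.mpr hne) h1
    omega
  · push_neg at hn
    rw [Finset.filter_false_of_mem, Finset.card_empty, Nat.cast_zero, neg_zero]
    intro j hj hdvd
    obtain ⟨hne, hle⟩ := hneg j hn (by simp at hj; omega)
    have h1 : d ∣ ((r - s) + (-s)*(j:ℤ)).natAbs := Int.natCast_dvd.mp hdvd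
    have h2 : d ≤ ((r - s) + (-s)*(j:ℤ)).natAbs := Nat.le_of_dvd (Int.natAbs_pos.mpr hne) h1
    omega

/-! ### bounds and non-vanishing helpers -/

theorem exp_bound {r s n : ℤ} {K : ℕ} (hK : r.natAbs + s.natAbs * (n.natAbs + 1) ≤ K)
    {t : ℤ} (ht : t.natAbs ≤ n.natAbs + 1) : (r + s*t).natAbs ≤ K := by
  have h3 := Int.natAbs_add_le r (s*t)
  have h1 : (s*t).natAbs = s.natAbs * t.natAbs := Int.natAbs_mul s t
  have h2 : s.natAbs * t.natAbs ≤ s.natAbs * (n.natAbs + 1) := Nat.mul_le_mul_left _ ht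
  omega

theorem ratOf_eq {r s t : ℤ} (hs : s ≠ 0) (h : r + s * t = 0) :
    (r:ℚ)/(s:ℚ) = -(t:ℚ) := by
  have hr : r = -(s*t) := by omega
  have hsQ : (s:ℚ) ≠ 0 := by exact_mod_cast hs
  rw [hr]
  push_cast
  field_simp

end
/-- Corollary 3.9: cyclotomic valuations of q-hypergeometric terms and the
factorization `Q_{𝐫,𝐭}(q;n) = ε·q^m·∏_b φ_b(q)^{Δ_b^{𝐫,𝐭}(n/b)}`. -/
theorem cycVal_qHypZ {v w : ℕ} (rr : Fin v → ℤ × ℤ) (tt : Fin w → ℤ × ℤ)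
    (hs : ∀ i, (rr i).2 ≠ 0) (hu : ∀ j, (tt j).2 ≠ 0) (n : ℤ)
    (hwf : n < 0 → ∀ i, ¬ IsPosInt (ratOf (rr i)) ∨ -(ratOf (rr i)) < (n : ℚ))
    (hwf' : 0 ≤ n → ∀ j, ¬ IsNonPosInt (ratOf (tt j)) ∨ (n : ℚ) ≤ -(ratOf (tt j)))
    (hnz : 0 ≤ n → ∀ i, ¬ IsNonPosInt (ratOf (rr i)) ∨ (n : ℚ) ≤ -(ratOf (rr i)))
    (hnz' : n < 0 → ∀ j, ¬ IsPosInt (ratOf (tt j)) ∨ -(ratOf (tt j)) < (n : ℚ)) :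
    (∀ b : ℕ, 0 < b → cycVal b (qHypZ rr tt n) = qDeltaFn b rr tt ((n : ℝ) / (b : ℝ))) ∧
      (∃ N : ℕ, ∀ b : ℕ, N ≤ b → qDeltaFn b rr tt ((n : ℝ) / (b : ℝ)) = 0) ∧
      (∃ (ε : ℚ) (m : ℤ) (N : ℕ), (ε = 1 ∨ ε = -1) ∧
        (∀ b : ℕ, N < b → qDeltaFn b rr tt ((n : ℝ) / (b : ℝ)) = 0) ∧
        qHypZ rr tt n = RatFunc.C ε * RatFunc.X ^ m *
          ∏ b ∈ Finset.Icc 1 N,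
            (algebraMap (Polynomial ℚ) (RatFunc ℚ) (cyclotomic b ℚ)) ^
              (qDeltaFn b rr tt ((n : ℝ) / (b : ℝ)))) := by
  classical
  set K : ℕ := (∑ i, ((rr i).1.natAbs + (rr i).2.natAbs * (n.natAbs + 1)))
    + (∑ j, ((tt j).1.natAbs + (tt j).2.natAbs * (n.natAbs + 1))) + 1 with hKdef
  have hKr : ∀ i : Fin v, (rr i).1.natAbs + (rr i).2.natAbs * (n.natAbs + 1) ≤ K := by
    intro i
    have h2 : (rr i).1.natAbs + (rr i).2.natAbs * (n.natAbs + 1)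
        ≤ ∑ i', ((rr i').1.natAbs + (rr i').2.natAbs * (n.natAbs + 1)) :=
      Finset.single_le_sum (f := fun i' => (rr i').1.natAbs + (rr i').2.natAbs * (n.natAbs + 1))
        (fun _ _ => Nat.zero_le _) (Finset.mem_univ i)
    omega
  have hKt : ∀ j : Fin w, (tt j).1.natAbs + (tt j).2.natAbs * (n.natAbs + 1) ≤ K := by
    intro j
    have h2 : (tt j).1.natAbs + (tt j).2.natAbs * (n.natAbs + 1)
        ≤ ∑ j', ((tt j').1.natAbs + (tt j').2.natAbs * (n.natAbs + 1)) :=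
      Finset.single_le_sum (f := fun j' => (tt j').1.natAbs + (tt j').2.natAbs * (n.natAbs + 1))
        (fun _ _ => Nat.zero_le _) (Finset.mem_univ j)
    omega
  have hratOf : ∀ p : ℤ × ℤ, ratOf p = (p.1:ℚ)/(p.2:ℚ) := fun p => rfl
  have hposr : ∀ i : Fin v, ∀ j : ℕ, 0 ≤ n → (j:ℤ) < n →
      (rr i).1 + (rr i).2*(j:ℤ) ≠ 0 ∧ ((rr i).1 + (rr i).2*(j:ℤ)).natAbs ≤ K := by
    intro i j hn hj
    constructor
    · intro h0
      rcases hnz hn i with hni | hle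
      · exact hni ⟨-(j:ℤ), by omega,
          by rw [hratOf, ratOf_eq (hs i) h0]; push_cast; ring⟩
      · rw [hratOf, ratOf_eq (hs i) h0] at hle
        have hjn : ((j:ℤ):ℚ) < ((n:ℤ):ℚ) := by exact_mod_cast hj
        push_cast at hle hjn
        linarith
    · exact exp_bound (hKr i) (by omega)
  have hnegr : ∀ i : Fin v, ∀ j : ℕ, n < 0 → (j:ℤ) < -n →
      ((rr i).1 - (rr i).2) + (-(rr i).2)*(j:ℤ) ≠ 0 ∧
        (((rr i).1 - (rr i).2) + (-(rr i).2)*(j:ℤ)).natAbs ≤ K := by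
    intro i j hn hj
    have hrw : ((rr i).1 - (rr i).2) + (-(rr i).2)*(j:ℤ)
        = (rr i).1 + (rr i).2 * (-1 - (j:ℤ)) := by ring
    rw [hrw]
    constructor
    · intro h0
      rcases hwf hn i with hni | hlt
      · exact hni ⟨(j:ℤ)+1, by omega,
          by rw [hratOf, ratOf_eq (hs i) h0]; push_cast; ring⟩
      · rw [hratOf, ratOf_eq (hs i) h0] at hlt
        have hle : ((n:ℤ):ℚ) ≤ ((-1 - (j:ℤ)):ℚ) := by exact_mod_cast (by omega : n ≤ -1 - (j:ℤ))
        push_cast at hlt hle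
        linarith
    · exact exp_bound (hKr i) (by omega)
  have hpost : ∀ i : Fin w, ∀ j : ℕ, 0 ≤ n → (j:ℤ) < n →
      (tt i).1 + (tt i).2*(j:ℤ) ≠ 0 ∧ ((tt i).1 + (tt i).2*(j:ℤ)).natAbs ≤ K := by
    intro i j hn hj
    constructor
    · intro h0
      rcases hwf' hn i with hni | hle
      · exact hni ⟨-(j:ℤ), by omega,
          by rw [hratOf, ratOf_eq (hu i) h0]; push_cast; ring⟩
      · rw [hratOf, ratOf_eq (hu i) h0] at hle
        have hjn : ((j:ℤ):ℚ) < ((n:ℤ):ℚ) := by exact_mod_cast hj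
        push_cast at hle hjn
        linarith
    · exact exp_bound (hKt i) (by omega)
  have hnegt : ∀ i : Fin w, ∀ j : ℕ, n < 0 → (j:ℤ) < -n →
      ((tt i).1 - (tt i).2) + (-(tt i).2)*(j:ℤ) ≠ 0 ∧
        (((tt i).1 - (tt i).2) + (-(tt i).2)*(j:ℤ)).natAbs ≤ K := by
    intro i j hn hj
    have hrw : ((tt i).1 - (tt i).2) + (-(tt i).2)*(j:ℤ)
        = (tt i).1 + (tt i).2 * (-1 - (j:ℤ)) := by ring
    rw [hrw]
    constructor
    · intro h0
      rcases hnz' hn i with hni | hlt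
      · exact hni ⟨(j:ℤ)+1, by omega,
          by rw [hratOf, ratOf_eq (hu i) h0]; push_cast; ring⟩
      · rw [hratOf, ratOf_eq (hu i) h0] at hlt
        have hle : ((n:ℤ):ℚ) ≤ ((-1 - (j:ℤ)):ℚ) := by exact_mod_cast (by omega : n ≤ -1 - (j:ℤ))
        push_cast at hlt hle
        linarith
    · exact exp_bound (hKt i) (by omega)
  set Z : ℕ → ℤ := fun d =>
    (∑ i, SCP d (rr i).1 (rr i).2 n) - (∑ j, SCP d (tt j).1 (tt j).2 n) with hZ
  have hShape : Shape K Z (qHypZ rr tt n) := by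
    rw [qHypZ, div_eq_mul_inv]
    refine Shape_congr (fun d => ?_) (Shape_mul
      (Shape_prod Finset.univ (fun i d => SCP d (rr i).1 (rr i).2 n) _
        (fun i _ => Shape_qPochZ n (hposr i) (hnegr i)))
      (Shape_inv (Shape_prod Finset.univ (fun j d => SCP d (tt j).1 (tt j).2 n) _
        (fun j _ => Shape_qPochZ n (hpost j) (hnegt j)))))
    simp only [hZ]
    ring
  have hqd : ∀ b : ℕ, 0 < b → qDeltaFn b rr tt ((n:ℝ)/(b:ℝ)) = Z b := by
    intro b hb
    simp only [qDeltaFn, hZ]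
    congr 1
    · exact Finset.sum_congr rfl fun i _ => lemA b hb _ _ (hs i) n
    · exact Finset.sum_congr rfl fun j _ => lemA b hb _ _ (hu j) n
  have hZ0 : ∀ b : ℕ, K < b → Z b = 0 := by
    intro b hbK
    simp only [hZ]
    rw [Finset.sum_congr rfl (fun i _ => SCP_zero hbK (hposr i) (hnegr i)),
      Finset.sum_congr rfl (fun j _ => SCP_zero hbK (hpost j) (hnegt j))]
    simp
  refine ⟨?_, ⟨K+1, ?_⟩, ?_⟩
  · intro b hb
    rw [hqd b hb, cycVal_of_Shape hShape hb]
    split_ifs with h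
    · rfl
    · exact (hZ0 b (by omega)).symm
  · intro b hb
    rw [hqd b (by omega), hZ0 b (by omega)]
  · obtain ⟨ε, m, hε, hfe⟩ := hShape
    refine ⟨ε, m, K, hε, fun b hb => by rw [hqd b (by omega), hZ0 b hb], ?_⟩
    rw [hfe]
    congr 1
    refine Finset.prod_congr rfl fun d hd => ?_
    have hd1 : 0 < d := (Finset.mem_Icc.mp hd).1
    rw [hqd d hd1, aphi_def]
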